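/- Let F be an Orlicz function with the Δ₂-condition, and suppose there exist a bounded monotone increasing function w: [1,∞) → ℝ and a constant C₀ such that F_t(x) ≤ C₀ F_s(x) + w(t) − w(s) for all 1 ≤ s ≤ t and 0 ≤ x ≤ 1. Then there exist constants C₂ > 1 and r > 0 such that for every 0 < x ≤ 1, any collection 1 ≤ a₁ < b₁ ≤ a₂ < b₂ ≤ ⋯ ≤ a_n < b_n with F_{b_k}(x) > 2C₀ F_{a_k}(x) for all k satisfies n ≤ C₂ x^{−r}. -/

import Mathlib

open Set

/-- `F_t(x) = F(tx)/F(t)`. -/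
noncomputable def Ft (F : ℝ → ℝ) (t x : ℝ) : ℝ := F (t * x) / F t

/-- A chain `1 ≤ a₁ < b₁ ≤ a₂ < b₂ ≤ ⋯ ≤ a_n < b_n`. -/
def OrlChain (a b : ℕ → ℝ) (n : ℕ) : Prop :=
  (∀ k < n, 1 ≤ a k ∧ a k < b k) ∧ ∀ k, k + 1 < n → b k ≤ a (k + 1)

/-- If `F_t(x) ≤ C₀ F_s(x) + w(t) − w(s)` for a bounded increasing weight `w`, then
the number of chain links with `F_{b_k}(x) > 2C₀ F_{a_k}(x)` is at most `C₂ x^{−r}`. -/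
theorem chain_count_of_weight
    (F : ℝ → ℝ) (hF0 : F 0 = 0)
    (hmono : StrictMonoOn F (Ici 0)) (hcont : ContinuousOn F (Ici 0))
    (hconv : ConvexOn ℝ (Ici 0) F)
    (Δ : ℝ) (hΔ : ∀ x ≥ (0 : ℝ), F (2 * x) ≤ Δ * F x)
    (w : ℝ → ℝ) (hw : MonotoneOn w (Ici 1)) (hwb : BddAbove (w '' Ici 1))
    (C₀ : ℝ)
    (hwF : ∀ s t : ℝ, 1 ≤ s → s ≤ t → ∀ x ∈ Icc (0 : ℝ) 1,
      Ft F t x ≤ C₀ * Ft F s x + w t - w s) :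
    ∃ C₂ > (1 : ℝ), ∃ r > (0 : ℝ), ∀ x ∈ Ioc (0 : ℝ) 1,
      ∀ (n : ℕ) (a b : ℕ → ℝ), OrlChain a b n →
      (∀ k < n, 2 * C₀ * Ft F (a k) x < Ft F (b k) x) → (n : ℝ) ≤ C₂ * x ^ (-r) := by
  have hFpos : ∀ t : ℝ, 0 < t → 0 < F t := by
    intro t ht
    have := hmono self_mem_Ici (mem_Ici.mpr ht.le) ht
    simpa [hF0] using this
  have hΔ1 : 1 < Δ := by
    have h2 := hΔ 1 (by norm_num)
    norm_num at h2
    have h12 : F 1 < F 2 := hmono (by norm_num) (by norm_num) (by norm_num)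
    nlinarith [hFpos 1 one_pos]
  have hΔ0 : 0 < Δ := lt_trans one_pos hΔ1
  set r := Real.logb 2 Δ with hrdef
  have hrpos : 0 < r := Real.logb_pos (by norm_num) hΔ1
  have hmonoOn : MonotoneOn F (Ici 0) := hmono.monotoneOn
  -- iterated Δ₂-condition
  have hiter : ∀ (m : ℕ) (t : ℝ), 0 ≤ t → F t ≤ Δ ^ m * F (t / 2 ^ m) := by
    intro m
    induction m with
    | zero => intro t ht; simp
    | succ m ih =>
      intro t ht
      have h1 := ih t ht
      have h2 : F (t / 2 ^ m) ≤ Δ * F (t / 2 ^ (m + 1)) := by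
        have h := hΔ (t / 2 ^ (m + 1)) (by positivity)
        have he : 2 * (t / 2 ^ (m + 1)) = t / 2 ^ m := by ring
        rwa [he] at h
      calc F t ≤ Δ ^ m * F (t / 2 ^ m) := h1
        _ ≤ Δ ^ m * (Δ * F (t / 2 ^ (m + 1))) :=
            mul_le_mul_of_nonneg_left h2 (by positivity)
        _ = Δ ^ (m + 1) * F (t / 2 ^ (m + 1)) := by ring
  -- uniform lower bound  Ft F t x ≥ Δ⁻¹ x^r
  have hlow : ∀ t : ℝ, 1 ≤ t → ∀ x ∈ Ioc (0 : ℝ) 1, Δ⁻¹ * x ^ r ≤ Ft F t x := by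
    intro t ht x hx
    obtain ⟨hx0, hx1⟩ := hx
    have htpos : 0 < t := lt_of_lt_of_le one_pos ht
    set m := ⌈Real.logb 2 x⁻¹⌉₊ with hm
    have hlogb0 : 0 ≤ Real.logb 2 x⁻¹ :=
      Real.logb_nonneg (by norm_num) (one_le_inv_iff₀.mpr ⟨hx0, hx1⟩)
    have hxm : x⁻¹ ≤ (2 : ℝ) ^ m := by
      have h1 : Real.logb 2 x⁻¹ ≤ (m : ℝ) := Nat.le_ceil _
      calc x⁻¹ = (2 : ℝ) ^ Real.logb 2 x⁻¹ :=
            (Real.rpow_logb two_pos (by norm_num) (by positivity)).symm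
        _ ≤ (2 : ℝ) ^ (m : ℝ) :=
            Real.rpow_le_rpow_of_exponent_le (by norm_num) h1
        _ = (2 : ℝ) ^ m := Real.rpow_natCast 2 m
    have h1x : 1 ≤ x * 2 ^ m := by
      have h := mul_le_mul_of_nonneg_left hxm hx0.le
      rwa [mul_inv_cancel₀ (ne_of_gt hx0)] at h
    have hdiv : t / 2 ^ m ≤ t * x := by
      rw [div_le_iff₀ (by positivity : (0:ℝ) < 2 ^ m)]
      nlinarith
    have hFchain : F t ≤ Δ ^ m * F (t * x) := by
      have h1 := hiter m t htpos.le
      have h2 : F (t / 2 ^ m) ≤ F (t * x) :=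
        hmonoOn (mem_Ici.mpr (by positivity)) (mem_Ici.mpr (by positivity)) hdiv
      calc F t ≤ Δ ^ m * F (t / 2 ^ m) := h1
        _ ≤ Δ ^ m * F (t * x) := mul_le_mul_of_nonneg_left h2 (by positivity)
    have hinvm : (Δ ^ m)⁻¹ ≤ Ft F t x := by
      rw [Ft, le_div_iff₀ (hFpos t htpos)]
      calc (Δ ^ m)⁻¹ * F t ≤ (Δ ^ m)⁻¹ * (Δ ^ m * F (t * x)) :=
            mul_le_mul_of_nonneg_left hFchain (by positivity)
        _ = F (t * x) := by field_simp
    have hkey : Δ ^ Real.logb 2 x⁻¹ = (x⁻¹) ^ r := by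
      rw [Real.rpow_def_of_pos hΔ0, Real.rpow_def_of_pos (inv_pos.mpr hx0),
        hrdef, Real.logb, Real.logb]
      congr 1
      ring
    have hΔm : (Δ : ℝ) ^ m ≤ Δ * (x ^ r)⁻¹ := by
      have hmle : (m : ℝ) ≤ Real.logb 2 x⁻¹ + 1 := (Nat.ceil_lt_add_one hlogb0).le
      calc (Δ : ℝ) ^ m = Δ ^ (m : ℝ) := (Real.rpow_natCast Δ m).symm
        _ ≤ Δ ^ (Real.logb 2 x⁻¹ + 1) :=
            Real.rpow_le_rpow_of_exponent_le hΔ1.le hmle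
        _ = Δ ^ Real.logb 2 x⁻¹ * Δ := by
            rw [Real.rpow_add hΔ0, Real.rpow_one]
        _ = Δ * (x ^ r)⁻¹ := by
            rw [hkey, Real.inv_rpow hx0.le, mul_comm]
    have hfin : Δ⁻¹ * x ^ r ≤ (Δ ^ m)⁻¹ := by
      have hxr : 0 < x ^ r := Real.rpow_pos_of_pos hx0 r
      have hpos : (0 : ℝ) < Δ ^ m := by positivity
      rw [le_inv_comm₀ (by positivity) hpos]
      calc (Δ : ℝ) ^ m ≤ Δ * (x ^ r)⁻¹ := hΔm
        _ = (Δ⁻¹ * x ^ r)⁻¹ := by rw [mul_inv, inv_inv]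
    exact hfin.trans hinvm
  -- the upper bound M for w
  obtain ⟨M, hM⟩ := hwb
  have hMw : ∀ t : ℝ, 1 ≤ t → w t ≤ M := fun t ht => hM ⟨t, ht, rfl⟩
  have hM1 : w 1 ≤ M := hMw 1 le_rfl
  refine ⟨2 * Δ * (M - w 1) + 2, by nlinarith, r, hrpos, ?_⟩
  intro x hx n a b hchain hlink
  have hx0 := hx.1
  have hxr : 0 < x ^ r := Real.rpow_pos_of_pos hx0 r
  have hxnr : x ^ (-r) = (x ^ r)⁻¹ := Real.rpow_neg hx0.le r
  set ε := Δ⁻¹ * x ^ r / 2 with hε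
  have hεpos : 0 < ε := by positivity
  rcases Nat.eq_zero_or_pos n with hn | hn
  · subst hn
    simp only [Nat.cast_zero, hxnr]
    have hC : (0:ℝ) < 2 * Δ * (M - w 1) + 2 := by nlinarith
    exact le_of_lt (mul_pos hC (inv_pos.mpr hxr))
  -- each link pushes w up by ε
  have hlinkw : ∀ k < n, w (a k) + ε ≤ w (b k) := by
    intro k hk
    obtain ⟨ha1, hab⟩ := hchain.1 k hk
    have hb1 : 1 ≤ b k := ha1.trans hab.le
    have hFt := hwF (a k) (b k) ha1 hab.le x ⟨hx0.le, hx.2⟩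
    have hbd := hlink k hk
    have hFb := hlow (b k) hb1 x hx
    simp only [hε]
    linarith
  have hind : ∀ k, k < n → w 1 + k * ε ≤ w (a k) := by
    intro k
    induction k with
    | zero =>
      intro hk
      have h := hw self_mem_Ici (mem_Ici.mpr (hchain.1 0 hk).1)
        (hchain.1 0 hk).1
      simpa using h
    | succ k ih =>
      intro hk
      have hk' : k < n := Nat.lt_of_succ_lt hk
      have h1 := ih hk'
      obtain ⟨ha1, hab⟩ := hchain.1 k hk'
      have hb1 : 1 ≤ b k := ha1.trans hab.le
      have hba : b k ≤ a (k + 1) := hchain.2 k hk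
      have ha1' : 1 ≤ a (k + 1) := (hchain.1 (k + 1) hk).1
      have hwba : w (b k) ≤ w (a (k + 1)) :=
        hw (mem_Ici.mpr hb1) (mem_Ici.mpr ha1') hba
      have hlk := hlinkw k hk'
      push_cast
      linarith
  -- conclude
  have hlast : w 1 + n * ε ≤ M := by
    obtain ⟨m, rfl⟩ := Nat.exists_eq_succ_of_ne_zero (Nat.pos_iff_ne_zero.mp hn)
    have h1 := hind m (Nat.lt_succ_self m)
    have h2 := hlinkw m (Nat.lt_succ_self m)
    obtain ⟨ha1, hab⟩ := hchain.1 m (Nat.lt_succ_self m)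
    have hb1 : 1 ≤ b m := ha1.trans hab.le
    have h3 := hMw (b m) hb1
    push_cast
    linarith
  have h2 : (n : ℝ) * x ^ r ≤ 2 * Δ * (M - w 1) := by
    have h := hlast
    simp only [hε] at h
    have hh : (n:ℝ) * (Δ⁻¹ * x ^ r / 2) ≤ M - w 1 := by linarith
    have hmul := mul_le_mul_of_nonneg_left hh (by positivity : (0:ℝ) ≤ 2 * Δ)
    calc (n:ℝ) * x ^ r = 2 * Δ * ((n:ℝ) * (Δ⁻¹ * x ^ r / 2)) := by
          field_simp
      _ ≤ 2 * Δ * (M - w 1) := hmul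
  rw [hxnr]
  have h3 : (n : ℝ) ≤ 2 * Δ * (M - w 1) * (x ^ r)⁻¹ := by
    rw [← div_eq_mul_inv, le_div_iff₀ hxr]
    exact h2
  have h4 : (0:ℝ) ≤ 2 * (x ^ r)⁻¹ := by positivity
  nlinarith [inv_pos.mpr hxr]
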